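/- Let 0 < α < 1/2, let θ*_A be a unit vector in ℝ², let s ∈ {−1, 1}, and define θ'_D = s · R θ*_A and θ'_A = (√(1 − 2α) · θ*_A − α s · R θ*_A)/(1 − α). Then arccos(⟪θ'_A, θ'_D⟫) = arcsin(α/(1−α)) + π/2; that is, the equilibrium strategies of the two players make an obtuse angle exceeding π/2 by exactly arcsin(α/(1−α)). -/

import Mathlib

open Real

/-- Rotation by `π/2`: `R(x, y) = (−y, x)`. -/
noncomputable def Rot (x : EuclideanSpace ℝ (Fin 2)) : EuclideanSpace ℝ (Fin 2) :=
  (WithLp.equiv 2 (Fin 2 → ℝ)).symm ![-(x 1), x 0]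

lemma inner_rot_self (x : EuclideanSpace ℝ (Fin 2)) :
    (inner ℝ x (Rot x) : ℝ) = 0 := by
  simp [Rot, PiLp.inner_apply, Fin.sum_univ_two, WithLp.equiv_symm_apply, PiLp.toLp_apply]
  ring

lemma inner_rot_rot (x : EuclideanSpace ℝ (Fin 2)) :
    (inner ℝ (Rot x) (Rot x) : ℝ) = (inner ℝ x x : ℝ) := by
  rw [PiLp.inner_apply, PiLp.inner_apply]
  simp [Rot, PiLp.inner_apply, Fin.sum_univ_two, WithLp.equiv_symm_apply, PiLp.toLp_apply]
  ring

/-- Theorem 2, item 2: the equilibrium strategies make angle `arcsin(α/(1−α)) + π/2`. -/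
theorem stmt_14 (α : ℝ) (hα : 0 < α) (hα' : α < 1 / 2)
    (θAstar : EuclideanSpace ℝ (Fin 2)) (hAs : ‖θAstar‖ = 1)
    (s : ℝ) (hs : s = -1 ∨ s = 1) :
    Real.arccos
        (inner ℝ
          ((1 - α)⁻¹ • (Real.sqrt (1 - 2 * α) • θAstar - (α * s) • Rot θAstar))
          (s • Rot θAstar) : ℝ) =
      Real.arcsin (α / (1 - α)) + Real.pi / 2 := by
  have hs2 : s ^ 2 = 1 := by rcases hs with h | h <;> simp [h]
  have hxx : (inner ℝ θAstar θAstar : ℝ) = 1 := by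
    rw [real_inner_self_eq_norm_sq, hAs]; norm_num
  have key : (inner ℝ
      ((1 - α)⁻¹ • (Real.sqrt (1 - 2 * α) • θAstar - (α * s) • Rot θAstar))
      (s • Rot θAstar) : ℝ) = -(α / (1 - α)) := by
    rw [real_inner_smul_left, inner_sub_left, real_inner_smul_left,
      real_inner_smul_left, real_inner_smul_right, real_inner_smul_right,
      inner_rot_self, inner_rot_rot, hxx]
    ring_nf
    rw [hs2]
    ring
  rw [key, Real.arccos_neg, Real.arccos, Real.arcsin]
  ring
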